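/- The dcpo L is an ω-algebraic domain: every element of L is the directed supremum of the compact elements below it, and K(L) is countable. -/

import Mathlib

/-- Nonempty finite sequences of positive naturals. -/
abbrev FinSeq := {l : List ℕ+ // l ≠ []}

/-- `Sig` : nonempty finite or countably infinite sequences of positive naturals. -/
abbrev Sig := FinSeq ⊕ (ℕ → ℕ+)

/-- The substring (prefix) order on `Sig`. -/
def sigLE : Sig → Sig → Prop
  | Sum.inl a, Sum.inl b => a.val <+: b.val
  | Sum.inl a, Sum.inr f => ∀ i : Fin a.val.length, a.val.get i = f i.val
  | Sum.inr f, Sum.inr g => f = g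
  | Sum.inr _, Sum.inl _ => False

/-- A subset `D` is directed w.r.t. relation `r`. -/
def DirectedSet {A : Type _} (r : A → A → Prop) (D : Set A) : Prop :=
  D.Nonempty ∧ ∀ a ∈ D, ∀ b ∈ D, ∃ c ∈ D, r a c ∧ r b c

/-- `s` is the supremum (least upper bound) of `D` w.r.t. `r`. -/
def IsSupOf {A : Type _} (r : A → A → Prop) (D : Set A) (s : A) : Prop :=
  (∀ a ∈ D, r a s) ∧ ∀ u, (∀ a ∈ D, r a u) → r s u

/-- `c` is a compact element w.r.t. `r`. -/
def IsCompactEl {A : Type _} (r : A → A → Prop) (c : A) : Prop :=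
  ∀ D s, DirectedSet r D → IsSupOf r D s → r c s → ∃ d ∈ D, r c d

/-- `x` is maximal w.r.t. `r`. -/
def IsMaximalEl {A : Type _} (r : A → A → Prop) (x : A) : Prop :=
  ∀ y, r x y → y = x

/-- `U` is Scott open w.r.t. `r`. -/
def ScottOpen {A : Type _} (r : A → A → Prop) (U : Set A) : Prop :=
  (∀ x ∈ U, ∀ y, r x y → y ∈ U) ∧
  ∀ D s, DirectedSet r D → IsSupOf r D s → s ∈ U → ∃ d ∈ D, d ∈ U

/-- The poset `X`: pairs `x_{m,n}` with `m ∈ ℕ₊`, `n ∈ ℕ₊ ∪ {ω}` (`ω = ⊤`). -/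
abbrev XP := ℕ+ × WithTop ℕ+

/-- Order on `X`: `x_{m₁,n₁} ≤ x_{m₂,n₂}` iff `m₁ = m₂` and `n₁ ≤ n₂`. -/
def xLE : XP → XP → Prop := fun a b => a.1 = b.1 ∧ a.2 ≤ b.2

/-- The carrier of `L = X ∪ Σ ∪ Σ*`. -/
abbrev LP := XP ⊕ (Sig ⊕ Sig)

def toX (p : XP) : LP := Sum.inl p
/-- The copy `Σ` inside `L`. -/
def toS (a : Sig) : LP := Sum.inr (Sum.inl a)
/-- The copy `Σ*` inside `L`. -/
def toS' (a : Sig) : LP := Sum.inr (Sum.inr a)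

/-- Underlying sequence of an element of `Σ ∪ Σ*`. -/
def sigOf : Sig ⊕ Sig → Sig := Sum.elim id id

/-- `entryGE v k m` : the length of `v` is `≥ k+1` and its `(k+1)`-th entry is `≥ m`
(0-based index `k`). -/
def entryGE : Sig → ℕ → ℕ+ → Prop
  | Sum.inl l, k, m => ∃ h : k < l.val.length, m ≤ l.val.get ⟨k, h⟩
  | Sum.inr f, k, m => m ≤ f k

/-- The order on `L`. -/
def lLE : LP → LP → Prop
  | Sum.inl x, Sum.inl y => xLE x y
  | Sum.inl x, Sum.inr w =>
      ∃ m : ℕ+, x.2 = (m : WithTop ℕ+) ∧ entryGE (sigOf w) x.1.natPred m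
  | Sum.inr (Sum.inl a), Sum.inr w => sigLE a (sigOf w)
  | Sum.inr (Sum.inr a), Sum.inr (Sum.inr b) => sigLE a b
  | Sum.inr (Sum.inr _), Sum.inr (Sum.inl _) => False
  | Sum.inr _, Sum.inl _ => False

/-! ### Basic sequence machinery -/

/-- Value of a sequence at position `n` (default 1 beyond the end). -/
def seqVal : Sig → ℕ → ℕ+
  | Sum.inl l, n => l.val.getD n 1
  | Sum.inr f, n => f n

/-- Position `n` exists in the sequence. -/
def seqLt : Sig → ℕ → Prop
  | Sum.inl l, n => n < l.val.length
  | Sum.inr _, _ => True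

lemma seqLt_mono {a : Sig} {m n : ℕ} (h : m ≤ n) (hn : seqLt a n) : seqLt a m := by
  cases a with
  | inl l => exact lt_of_le_of_lt h hn
  | inr f => trivial

lemma sigLE_iff (a b : Sig) :
    sigLE a b ↔ ∀ n, seqLt a n → seqLt b n ∧ seqVal a n = seqVal b n := by
  cases a with
  | inl l =>
    cases b with
    | inl l' =>
      show l.val <+: l'.val ↔ _
      constructor
      · intro h n hn
        refine ⟨lt_of_lt_of_le hn h.length_le, ?_⟩
        show l.val.getD n 1 = l'.val.getD n 1
        rw [List.getD_eq_getElem l.val 1 hn,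
          List.getD_eq_getElem l'.val 1 (lt_of_lt_of_le hn h.length_le)]
        exact h.getElem hn
      · intro h
        have hlen : l.val.length ≤ l'.val.length := by
          by_contra hc
          push_neg at hc
          exact absurd (h l'.val.length hc).1 (lt_irrefl _)
        have : l.val = l'.val.take l.val.length := by
          apply List.ext_getElem
          · simp [hlen]
          · intro i h1 h2
            have hv := (h i h1).2
            rw [List.getElem_take]
            show l.val[i] = l'.val[i]'(lt_of_lt_of_le h1 hlen)
            rw [← List.getD_eq_getElem l.val 1 h1,
              ← List.getD_eq_getElem l'.val 1 (lt_of_lt_of_le h1 hlen)]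
            exact hv
        rw [this]
        exact List.take_prefix _ _
    | inr f =>
      show (∀ i : Fin l.val.length, l.val.get i = f i.val) ↔ _
      constructor
      · intro h n hn
        refine ⟨trivial, ?_⟩
        show l.val.getD n 1 = f n
        rw [List.getD_eq_getElem l.val 1 hn]
        exact h ⟨n, hn⟩
      · intro h i
        have := (h i.val i.isLt).2
        show l.val.get i = f i.val
        rw [List.get_eq_getElem]
        rw [seqVal] at this
        rw [← List.getD_eq_getElem l.val 1 i.isLt]
        exact this
  | inr f =>
    cases b with
    | inl l' =>
      show False ↔ _
      simp only [false_iff]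
      intro h
      exact absurd (h l'.val.length trivial).1 (lt_irrefl _)
    | inr g =>
      show f = g ↔ _
      constructor
      · rintro rfl n _; exact ⟨trivial, rfl⟩
      · intro h; funext n; exact (h n trivial).2

lemma sigLE_refl (a : Sig) : sigLE a a := by
  rw [sigLE_iff]; intro n hn; exact ⟨hn, rfl⟩

lemma sigLE_trans {a b c : Sig} (hab : sigLE a b) (hbc : sigLE b c) : sigLE a c := by
  rw [sigLE_iff] at *
  intro n hn
  obtain ⟨h1, h2⟩ := hab n hn
  obtain ⟨h3, h4⟩ := hbc n h1
  exact ⟨h3, h2.trans h4⟩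

lemma entryGE_iff (a : Sig) (k : ℕ) (m : ℕ+) :
    entryGE a k m ↔ seqLt a k ∧ m ≤ seqVal a k := by
  cases a with
  | inl l =>
    show (∃ h : k < l.val.length, m ≤ l.val.get ⟨k, h⟩) ↔ _
    constructor
    · rintro ⟨h, hm⟩
      refine ⟨h, ?_⟩
      show m ≤ l.val.getD k 1
      rw [List.getD_eq_getElem l.val 1 h]
      exact hm
    · rintro ⟨h, hm⟩
      refine ⟨h, ?_⟩
      show m ≤ l.val.get ⟨k, h⟩
      exact le_of_le_of_eq hm ((List.getD_eq_getElem l.val 1 h).trans rfl)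
  | inr f => exact ⟨fun h => ⟨trivial, h⟩, fun h => h.2⟩

lemma entryGE_mono {a b : Sig} {k : ℕ} {m m' : ℕ+} (hle : sigLE a b) (hm : m' ≤ m)
    (h : entryGE a k m) : entryGE b k m' := by
  rw [entryGE_iff] at *
  rw [sigLE_iff] at hle
  obtain ⟨h1, h2⟩ := hle k h.1
  exact ⟨h1, by rw [← h2]; exact hm.trans h.2⟩

/-! ### Basic `lLE` lemmas -/

lemma lLE_X_iff (x y : XP) : lLE (toX x) (toX y) ↔ xLE x y := Iff.rfl

lemma lLE_Xr_iff (x : XP) (w : Sig ⊕ Sig) :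
    lLE (toX x) (Sum.inr w) ↔ ∃ m : ℕ+, x.2 = (m : WithTop ℕ+) ∧ entryGE (sigOf w) x.1.natPred m :=
  Iff.rfl

lemma lLE_Sr_iff (a : Sig) (w : Sig ⊕ Sig) :
    lLE (toS a) (Sum.inr w) ↔ sigLE a (sigOf w) := Iff.rfl

lemma lLE_S'S'_iff (a b : Sig) : lLE (toS' a) (toS' b) ↔ sigLE a b := Iff.rfl

lemma not_lLE_S'S (a b : Sig) : ¬ lLE (toS' a) (toS b) := fun h => h

lemma not_lLE_rX (w : Sig ⊕ Sig) (x : XP) : ¬ lLE (Sum.inr w) (toX x) := by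
  rcases w with a | a <;> exact fun h => h

lemma lLE_refl (x : LP) : lLE x x := by
  rcases x with p | (a | a)
  · exact ⟨rfl, le_refl _⟩
  · exact sigLE_refl a
  · exact sigLE_refl a

lemma sigOf_mono {w w' : Sig ⊕ Sig} (h : lLE (Sum.inr w) (Sum.inr w')) :
    sigLE (sigOf w) (sigOf w') := by
  rcases w with a | a
  · exact h
  · rcases w' with b | b
    · exact absurd h (fun h => h)
    · exact h

lemma lLE_trans {x y z : LP} (hxy : lLE x y) (hyz : lLE y z) : lLE x z := by
  rcases x with p | w
  · rcases y with q | v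
    · rcases z with r | u
      · exact ⟨hxy.1.trans hyz.1, hxy.2.trans hyz.2⟩
      · -- p ≤ q in X, q ≤ seq u
        obtain ⟨m, hm, hge⟩ := hyz
        obtain ⟨hp1, hp2⟩ := hxy
        rw [hm] at hp2
        rcases hp : p.2 with _ | m'
        · rw [hp] at hp2
          exact absurd hp2 (by simp [WithTop.none_eq_top])
        · refine ⟨m', hp, ?_⟩
          rw [hp] at hp2
          rw [hp1]
          refine entryGE_mono (sigLE_refl _) ?_ hge
          rw [WithTop.some_eq_coe, WithTop.coe_le_coe] at hp2
          exact hp2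
    · rcases z with r | u
      · exact absurd hyz (not_lLE_rX v r)
      · obtain ⟨m, hm, hge⟩ := hxy
        exact ⟨m, hm, entryGE_mono (sigOf_mono hyz) (le_refl m) hge⟩
  · rcases y with q | v
    · exact absurd hxy (not_lLE_rX w q)
    · rcases z with r | u
      · exact absurd hyz (not_lLE_rX v r)
      · rcases w with a | a
        · exact sigLE_trans (hxy : sigLE a (sigOf v)) (sigOf_mono hyz)
        · rcases v with b | b
          · exact absurd hxy (not_lLE_S'S a b)
          · rcases u with c | c
            · exact absurd hyz (not_lLE_S'S b c)
            · exact sigLE_trans (hxy : sigLE a b) hyz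
/-! ### Suprema machinery -/

lemma nat_max_exists (s : Set ℕ) (hne : s.Nonempty) (B : ℕ) (hB : ∀ n ∈ s, n ≤ B) :
    ∃ m ∈ s, ∀ n ∈ s, n ≤ m :=
  ⟨sSup s, Nat.sSup_mem hne ⟨B, fun n hn => hB n hn⟩,
    fun n hn => le_csSup ⟨B, fun x hx => hB x hx⟩ hn⟩

/-- A maximal element of a set is its supremum. -/
lemma sup_of_max {A : Type _} {r : A → A → Prop} {D : Set A} {c : A}
    (hc : c ∈ D) (hmax : ∀ b ∈ D, r b c) : IsSupOf r D c :=
  ⟨hmax, fun u hu => hu c hc⟩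

/-- Directed subsets of `Sig` have suprema. -/
lemma sig_sup (C : Set Sig) (hC : DirectedSet sigLE C) : ∃ t, IsSupOf sigLE C t := by
  obtain ⟨hne, hdir⟩ := hC
  by_cases hmax : ∃ c ∈ C, ∀ b ∈ C, sigLE b c
  · obtain ⟨c, hc, hm⟩ := hmax
    exact ⟨c, sup_of_max hc hm⟩
  have hlen : ∀ n, ∃ a ∈ C, seqLt a n := by
    by_contra hcon
    push_neg at hcon
    obtain ⟨n, hn⟩ := hcon
    -- every element of C is a finite list of length ≤ n
    have hfin : ∀ a ∈ C, ∃ l : FinSeq, a = Sum.inl l ∧ l.val.length ≤ n := by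
      intro a ha
      cases a with
      | inl l =>
        refine ⟨l, rfl, ?_⟩
        have := hn _ ha
        simpa [seqLt] using this
      | inr f => exact absurd trivial (hn _ ha)
    -- set of lengths
    obtain ⟨a₀, ha₀⟩ := hne
    obtain ⟨l₀, rfl, hl₀⟩ := hfin a₀ ha₀
    obtain ⟨M, hM, hMmax⟩ := nat_max_exists
      {m | ∃ l : FinSeq, Sum.inl l ∈ C ∧ l.val.length = m}
      ⟨l₀.val.length, l₀, ha₀, rfl⟩ n
      (by rintro m ⟨l, hl, rfl⟩; obtain ⟨l', he, h'⟩ := hfin _ hl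
          cases he; exact h')
    obtain ⟨lM, hlM, hlMlen⟩ := hM
    refine hmax ⟨Sum.inl lM, hlM, ?_⟩
    intro b hb
    obtain ⟨e, he, hbe, hMe⟩ := hdir b hb _ hlM
    obtain ⟨le', rfl, _⟩ := hfin e he
    have hlenle : le'.val.length ≤ M := hMmax _ ⟨le', he, rfl⟩
    have : lM.val = le'.val := by
      refine List.IsPrefix.eq_of_length hMe ?_
      have := (hMe : lM.val <+: le'.val).length_le
      omega
    have : Sum.inl le' = (Sum.inl lM : Sig) := by
      congr 1; exact Subtype.ext this.symm
    rw [← this]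
    exact hbe
  -- lengths unbounded: build the infinite sequence
  choose pick hpickC hpickLt using hlen
  set f : ℕ → ℕ+ := fun n => seqVal (pick n) n with hf
  have hagree : ∀ a ∈ C, ∀ n, seqLt a n → seqVal a n = f n := by
    intro a ha n hn
    obtain ⟨e, he, hae, hpe⟩ := hdir a ha _ (hpickC n)
    rw [sigLE_iff] at hae hpe
    rw [(hae n hn).2, hf]
    exact ((hpe n (hpickLt n)).2).symm
  refine ⟨Sum.inr f, ?_, ?_⟩
  · intro a ha
    rw [sigLE_iff]
    intro n hn
    exact ⟨trivial, hagree a ha n hn⟩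
  · intro u hu
    cases u with
    | inl l =>
      have := hu _ (hpickC l.val.length)
      rw [sigLE_iff] at this
      exact absurd ((this _ (hpickLt l.val.length)).1 : l.val.length < l.val.length)
        (lt_irrefl _)
    | inr g =>
      have : f = g := by
        funext n
        have := hu _ (hpickC n)
        rw [sigLE_iff] at this
        rw [hf]
        exact (this n (hpickLt n)).2
      rw [this]
      exact sigLE_refl _

/-- If a directed set lies in the `X` part, its sup (if any) lies in the `X` part;
more precisely any sequence upper bound is not least unless an `X` upper bound exists.
We prove: a directed subset of the `X` part has a supremum in `LP`. -/
lemma x_sup (D : Set LP) (hD : DirectedSet lLE D)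
    (hX : ∀ d ∈ D, ∃ x : XP, d = toX x) : ∃ s, IsSupOf lLE D s := by
  obtain ⟨hne, hdir⟩ := hD
  by_cases hmax : ∃ c ∈ D, ∀ b ∈ D, lLE b c
  · obtain ⟨c, hc, hm⟩ := hmax
    exact ⟨c, sup_of_max hc hm⟩
  obtain ⟨d₀, hd₀⟩ := hne
  obtain ⟨⟨k, n₀⟩, rfl⟩ := hX d₀ hd₀
  -- all elements have first coordinate k
  have hfst : ∀ d ∈ D, ∃ n, d = toX (k, n) := by
    intro d hd
    obtain ⟨⟨k', n⟩, rfl⟩ := hX d hd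
    obtain ⟨e, he, h1, h2⟩ := hdir _ hd _ hd₀
    obtain ⟨⟨k'', n''⟩, rfl⟩ := hX e he
    have e1 : k' = k'' := h1.1
    have e2 : k = k'' := h2.1
    exact ⟨n, by rw [e1, ← e2]⟩
  -- no top element in D (else it would be max); and any bounded family has a max elt
  have hbd : ∀ (B : ℕ+), (∀ d ∈ D, ∃ n : ℕ+, d = toX (k, n) ∧ n ≤ B) → False := by
    intro B hB
    obtain ⟨M, hM, hMmax⟩ := nat_max_exists
      {m | ∃ n : ℕ+, toX (k, (n : WithTop ℕ+)) ∈ D ∧ (n : ℕ) = m}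
      (by obtain ⟨n, hn, _⟩ := hB _ hd₀; exact ⟨n, n, hn ▸ hd₀, rfl⟩) B
      (by rintro m ⟨n, hn, rfl⟩
          obtain ⟨n', he, hle⟩ := hB _ hn
          have : n = n' := by
            have := congrArg (fun d => d) he
            simp only [toX, Sum.inl.injEq, Prod.mk.injEq] at he
            exact_mod_cast he.2
          exact_mod_cast this ▸ hle)
    obtain ⟨nM, hnM, hnMeq⟩ := hM
    refine hmax ⟨toX (k, nM), hnM, ?_⟩
    intro b hb
    obtain ⟨n, rfl⟩ := hfst b hb
    obtain ⟨n', heq, _⟩ := hB _ hb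
    simp only [toX, Sum.inl.injEq, Prod.mk.injEq] at heq
    refine ⟨rfl, ?_⟩
    show n ≤ ((nM : ℕ+) : WithTop ℕ+)
    rw [heq.2, WithTop.coe_le_coe]
    have h1 : (n' : ℕ) ≤ M := hMmax _ ⟨n', heq.2 ▸ hb, rfl⟩
    rw [← hnMeq] at h1
    exact_mod_cast h1
  -- the sup is (k, ⊤)
  refine ⟨toX (k, ⊤), ?_, ?_⟩
  · intro d hd
    obtain ⟨n, rfl⟩ := hfst d hd
    exact ⟨rfl, le_top⟩
  · intro u hu
    cases u with
    | inl x =>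
      obtain ⟨k', r⟩ := x
      have h₀ := hu _ hd₀
      have hk : k = k' := h₀.1
      cases hk
      rcases r with _ | p
      · exact ⟨rfl, le_refl _⟩
      · exfalso
        refine hbd p ?_
        intro d hd
        obtain ⟨n, rfl⟩ := hfst d hd
        have h2 := (hu _ hd).2
        rcases n with _ | q
        · have hfalse : (⊤ : WithTop ℕ+) ≤ ((p : ℕ+) : WithTop ℕ+) := h2
          simp at hfalse
        · refine ⟨q, rfl, ?_⟩
          have h3 : ((q : ℕ+) : WithTop ℕ+) ≤ ((p : ℕ+) : WithTop ℕ+) := h2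
          exact_mod_cast h3
    | inr w =>
      exfalso
      have h₀ := hu _ hd₀
      obtain ⟨m₀, _, hge₀⟩ := h₀
      refine hbd (seqVal (sigOf w) k.natPred) ?_
      intro d hd
      obtain ⟨n, rfl⟩ := hfst d hd
      obtain ⟨m, hm, hge⟩ := hu _ hd
      rw [entryGE_iff] at hge
      refine ⟨m, ?_, hge.2⟩
      have hn : n = ((m : ℕ+) : WithTop ℕ+) := hm
      rw [hn]
/-- `L` is a dcpo. -/
lemma lp_sup (D : Set LP) (hD : DirectedSet lLE D) : ∃ s, IsSupOf lLE D s := by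
  by_cases hX : ∀ d ∈ D, ∃ x : XP, d = toX x
  · exact x_sup D hD hX
  push_neg at hX
  obtain ⟨d₀, hd₀, hd₀X⟩ := hX
  obtain ⟨hne, hdir⟩ := hD
  obtain ⟨w₀, rfl⟩ : ∃ w, d₀ = Sum.inr w := by
    rcases d₀ with p | w
    · exact absurd rfl (hd₀X p)
    · exact ⟨w, rfl⟩
  set C : Set Sig := {a | ∃ w, Sum.inr w ∈ D ∧ sigOf w = a} with hCdef
  have hCmem : ∀ w, Sum.inr w ∈ D → sigOf w ∈ C := fun w hw => ⟨w, hw, rfl⟩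
  have hCdir : DirectedSet sigLE C := by
    refine ⟨⟨sigOf w₀, hCmem _ hd₀⟩, ?_⟩
    rintro a ⟨wa, hwa, rfl⟩ b ⟨wb, hwb, rfl⟩
    obtain ⟨e, he, h1, h2⟩ := hdir _ hwa _ hwb
    obtain ⟨we, rfl⟩ : ∃ w, e = Sum.inr w := by
      rcases e with p | w
      · exact absurd h1 (not_lLE_rX wa p)
      · exact ⟨w, rfl⟩
    exact ⟨sigOf we, hCmem _ he, sigOf_mono h1, sigOf_mono h2⟩
  obtain ⟨t, htub, htlub⟩ := sig_sup C hCdir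
  have hXle : ∀ p : XP, toX p ∈ D → ∀ u : Sig ⊕ Sig, sigLE t (sigOf u) →
      lLE (toX p) (Sum.inr u) := by
    intro p hp u htu
    obtain ⟨e, he, h1, h2⟩ := hdir _ hp _ hd₀
    obtain ⟨we, rfl⟩ : ∃ w, e = Sum.inr w := by
      rcases e with q | w
      · exact absurd h2 (not_lLE_rX w₀ q)
      · exact ⟨w, rfl⟩
    obtain ⟨m, hm, hge⟩ := h1
    exact ⟨m, hm, entryGE_mono (sigLE_trans (htub _ (hCmem _ he)) htu) (le_refl m) hge⟩
  by_cases hS' : ∃ b, toS' b ∈ D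
  · refine ⟨toS' t, ?_, ?_⟩
    · intro d hd
      rcases d with p | (a | a)
      · exact hXle p hd _ (sigLE_refl t)
      · exact htub _ (hCmem (Sum.inl a) hd)
      · exact htub _ (hCmem (Sum.inr a) hd)
    · intro u hu
      obtain ⟨b, hb⟩ := hS'
      have hbu := hu _ hb
      obtain ⟨w, rfl⟩ : ∃ w, u = Sum.inr (Sum.inr w) := by
        rcases u with p | (c | c)
        · exact absurd hbu (not_lLE_rX _ p)
        · exact absurd hbu (not_lLE_S'S b c)
        · exact ⟨c, rfl⟩
      show sigLE t w
      refine htlub w ?_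
      rintro a ⟨wa, hwa, rfl⟩
      have h := hu _ hwa
      rcases wa with c | c
      · exact h
      · exact h
  · refine ⟨toS t, ?_, ?_⟩
    · intro d hd
      rcases d with p | (a | a)
      · exact hXle p hd _ (sigLE_refl t)
      · exact htub _ (hCmem (Sum.inl a) hd)
      · exact absurd ⟨a, hd⟩ hS'
    · intro u hu
      have h0 := hu _ hd₀
      obtain ⟨w, rfl⟩ : ∃ w, u = Sum.inr w := by
        rcases u with p | w
        · exact absurd h0 (not_lLE_rX _ p)
        · exact ⟨w, rfl⟩
      show sigLE t (sigOf w)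
      refine htlub _ ?_
      rintro a ⟨wa, hwa, rfl⟩
      have h := hu _ hwa
      rcases wa with c | c
      · exact h
      · exact absurd ⟨c, hwa⟩ hS'
/-! ### Compactness machinery -/

lemma seqLt_zero (a : Sig) : seqLt a 0 := by
  cases a with
  | inl l => exact List.length_pos_iff.mpr l.prop
  | inr f => trivial

lemma seqLt_lt {a : Sig} {j K' : ℕ} (h1 : seqLt a j) (h2 : ¬ seqLt a K') : j < K' := by
  cases a with
  | inl l =>
    have h1' : j < l.val.length := h1
    have h2' : ¬ (K' < l.val.length) := h2
    omega
  | inr f => exact absurd trivial h2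

/-- Common first-coordinate lemma for directed sets inside `X`. -/
lemma x_first_coord {D : Set LP} (hdir : ∀ a ∈ D, ∀ b ∈ D, ∃ c ∈ D, lLE a c ∧ lLE b c)
    (hX : ∀ d ∈ D, ∃ x : XP, d = toX x) {k : ℕ+} {n₀ : WithTop ℕ+}
    (hd₀ : toX (k, n₀) ∈ D) : ∀ d ∈ D, ∃ n, d = toX (k, n) := by
  intro d hd
  obtain ⟨⟨k', n⟩, rfl⟩ := hX d hd
  obtain ⟨e, he, h1, h2⟩ := hdir _ hd _ hd₀
  obtain ⟨⟨k'', n''⟩, rfl⟩ := hX e he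
  have e1 : k' = k'' := h1.1
  have e2 : k = k'' := h2.1
  exact ⟨n, by rw [e1, ← e2]⟩

/-- A directed set contained in the `X` part cannot have a sequence as supremum. -/
lemma not_seq_sup_of_X (D : Set LP) (hD : DirectedSet lLE D)
    (hX : ∀ d ∈ D, ∃ x : XP, d = toX x) (w : Sig ⊕ Sig) :
    ¬ IsSupOf lLE D (Sum.inr w) := by
  rintro ⟨hub, hlub⟩
  obtain ⟨⟨d₀, hd₀⟩, hdir⟩ := hD
  obtain ⟨⟨k, n₀⟩, rfl⟩ := hX d₀ hd₀
  have hfst := x_first_coord hdir hX hd₀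
  have hu : ∀ d ∈ D, lLE d (toX (k, (seqVal (sigOf w) k.natPred : ℕ+))) := by
    intro d hd
    obtain ⟨n, rfl⟩ := hfst d hd
    obtain ⟨m, hm, hge⟩ := hub _ hd
    rw [entryGE_iff] at hge
    refine ⟨rfl, ?_⟩
    show n ≤ ((seqVal (sigOf w) k.natPred : ℕ+) : WithTop ℕ+)
    have hn : n = ((m : ℕ+) : WithTop ℕ+) := hm
    rw [hn, WithTop.coe_le_coe]
    exact hge.2
  exact not_lLE_rX w _ (hlub _ hu)

/-- Truncation argument: if the supremum of a directed set is a sequence of length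
`≥ K`, the set contains a sequence element, but every sequence element has length
`< K`, we get a contradiction. -/
lemma trunc_contra (D : Set LP) (hdir : ∀ a ∈ D, ∀ b ∈ D, ∃ c ∈ D, lLE a c ∧ lLE b c)
    (w : Sig ⊕ Sig) (hsup : IsSupOf lLE D (Sum.inr w)) (K : ℕ) (hK : 1 ≤ K)
    (hKw : seqLt (sigOf w) (K - 1))
    (hshort : ∀ v : Sig ⊕ Sig, Sum.inr v ∈ D → ¬ seqLt (sigOf v) (K - 1))
    (hseq : ∃ v : Sig ⊕ Sig, Sum.inr v ∈ D) : False := by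
  obtain ⟨hub, hlub⟩ := hsup
  obtain ⟨v₀, hv₀⟩ := hseq
  -- K = 1 is impossible
  rcases Nat.lt_or_ge K 2 with hK1 | hK2
  · have : K - 1 = 0 := by omega
    rw [this] at hshort
    exact hshort v₀ hv₀ (seqLt_zero _)
  -- the truncated list
  set T : List ℕ+ := List.ofFn (fun i : Fin (K-1) => seqVal (sigOf w) i) with hT
  have hTlen : T.length = K - 1 := List.length_ofFn
  have hTne : T ≠ [] := by
    intro h
    rw [h] at hTlen
    simp at hTlen
    omega
  have hTval : ∀ n, n < K - 1 → seqVal (Sum.inl ⟨T, hTne⟩) n = seqVal (sigOf w) n := by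
    intro n hn
    show T.getD n 1 = _
    rw [List.getD_eq_getElem T 1 (by rw [hTlen]; exact hn)]
    simp [hT]
  have hTlt : ∀ n, n < K - 1 → seqLt (Sum.inl ⟨T, hTne⟩ : Sig) n := by
    intro n hn
    show n < T.length
    rw [hTlen]; exact hn
  -- value agreement of elements of D with w
  have hagree : ∀ v : Sig ⊕ Sig, Sum.inr v ∈ D → ∀ n, seqLt (sigOf v) n →
      seqVal (sigOf v) n = seqVal (sigOf w) n := by
    intro v hv n hn
    have := sigOf_mono (hub _ hv)
    rw [sigLE_iff] at this
    exact (this n hn).2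
  -- u := toS' of the truncation is an upper bound
  have hu : ∀ d ∈ D, lLE d (toS' (Sum.inl ⟨T, hTne⟩)) := by
    intro d hd
    rcases d with p | v
    · -- X element
      obtain ⟨m, hm, hge⟩ := hub _ hd
      obtain ⟨e, he, h1, h2⟩ := hdir _ hd _ hv₀
      obtain ⟨ve, rfl⟩ : ∃ u', e = Sum.inr u' := by
        rcases e with q | u'
        · exact absurd h2 (not_lLE_rX v₀ q)
        · exact ⟨u', rfl⟩
      obtain ⟨m', hm', hge'⟩ := h1
      rw [entryGE_iff] at hge hge'
      have hlt : p.1.natPred < K - 1 := seqLt_lt hge'.1 (hshort _ he)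
      refine ⟨m, hm, ?_⟩
      rw [entryGE_iff]
      refine ⟨hTlt _ hlt, ?_⟩
      show m ≤ seqVal (Sum.inl ⟨T, hTne⟩) p.1.natPred
      rw [hTval _ hlt]
      exact hge.2
    · -- sequence element
      have hs : sigLE (sigOf v) (Sum.inl ⟨T, hTne⟩) := by
        rw [sigLE_iff]
        intro n hn
        have hlt : n < K - 1 := seqLt_lt hn (hshort _ hd)
        exact ⟨hTlt _ hlt, by rw [hagree v hd n hn, hTval _ hlt]⟩
      rcases v with a | a
      · exact hs
      · exact hs
  -- but the sup is not below u
  have := hlub _ hu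
  have hcon : sigLE (sigOf w) (Sum.inl ⟨T, hTne⟩) := by
    rcases w with a | a
    · exact this
    · exact this
  rw [sigLE_iff] at hcon
  have := (hcon (K-1) hKw).1
  have : K - 1 < T.length := this
  omega
/-! ### Compact elements -/

lemma pnat_lt_le_sub_one {q m : ℕ+} (h2 : 1 < m) (h : q < m) : q ≤ m - 1 := by
  have h' : (q : ℕ) < (m : ℕ) := h
  have hsub : ((m - 1 : ℕ+) : ℕ) = (m : ℕ) - 1 := by
    rw [PNat.sub_coe]
    simp [h2]
  have : (q : ℕ) ≤ ((m - 1 : ℕ+) : ℕ) := by omega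
  exact_mod_cast this

lemma compact_X (k m : ℕ+) : IsCompactEl lLE (toX (k, (m : WithTop ℕ+))) := by
  intro D s hD hsup hle
  by_contra hcon
  push_neg at hcon
  rcases s with y | w
  · -- sup in X
    have hX : ∀ d ∈ D, ∃ x : XP, d = toX x := by
      intro d hd
      rcases d with p | v
      · exact ⟨p, rfl⟩
      · exact absurd (hsup.1 _ hd) (not_lLE_rX v y)
    have hk : k = y.1 := hle.1
    have hm : (m : WithTop ℕ+) ≤ y.2 := hle.2
    obtain ⟨⟨d₀, hd₀⟩, hdir⟩ := hD
    obtain ⟨⟨k₀, n₀⟩, rfl⟩ := hX d₀ hd₀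
    have hk₀ : k₀ = y.1 := (hsup.1 _ hd₀).1
    have hfst := x_first_coord hdir hX hd₀
    -- every element's second coordinate is < m
    have hlt : ∀ n : WithTop ℕ+, toX (k₀, n) ∈ D → n < (m : WithTop ℕ+) := by
      intro n hn
      by_contra hge
      push_neg at hge
      exact hcon _ hn ⟨by rw [hk, ← hk₀], hge⟩
    rcases eq_or_lt_of_le m.one_le with h1 | h1
    · -- m = 1 : impossible since all values are ≥ 1
      have := hlt n₀ hd₀
      rcases n₀ with _ | q
      · exact absurd this (by simp [WithTop.none_eq_top, ← h1])
      · have hq : ((q : ℕ+) : WithTop ℕ+) < ((m : ℕ+) : WithTop ℕ+) := this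
        rw [WithTop.coe_lt_coe] at hq
        exact absurd hq (by rw [← h1]; exact not_lt.mpr q.one_le)
    · -- m > 1 : (y.1, m-1) is a smaller upper bound
      have hub : ∀ d ∈ D, lLE d (toX (y.1, ((m - 1 : ℕ+) : WithTop ℕ+))) := by
        intro d hd
        obtain ⟨n, rfl⟩ := hfst d hd
        refine ⟨(hsup.1 _ hd).1, ?_⟩
        have := hlt n hd
        rcases n with _ | q
        · exact absurd this (by simp [WithTop.none_eq_top])
        · have hq : ((q : ℕ+) : WithTop ℕ+) < ((m : ℕ+) : WithTop ℕ+) := this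
          rw [WithTop.coe_lt_coe] at hq
          show ((q : ℕ+) : WithTop ℕ+) ≤ _
          rw [WithTop.coe_le_coe]
          exact pnat_lt_le_sub_one h1 hq
      have := (hsup.2 _ hub).2
      have hy : y.2 ≤ ((m - 1 : ℕ+) : WithTop ℕ+) := this
      have h2 : (m : WithTop ℕ+) ≤ ((m - 1 : ℕ+) : WithTop ℕ+) := hm.trans hy
      rw [WithTop.coe_le_coe] at h2
      have h3 : (m : ℕ) ≤ ((m - 1 : ℕ+) : ℕ) := h2
      have h1' : 1 < (m : ℕ) := h1
      rw [PNat.sub_coe] at h3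
      simp [h1] at h3
      omega
  · -- sup is a sequence
    obtain ⟨m', hm', hge⟩ := hle
    have hmm : m' = m := by
      have : ((m : ℕ+) : WithTop ℕ+) = ((m' : ℕ+) : WithTop ℕ+) := hm'
      exact (WithTop.coe_injective this).symm
    subst hmm
    rw [entryGE_iff] at hge
    obtain ⟨hne, hdir⟩ := hD
    by_cases hseq : ∃ v : Sig ⊕ Sig, Sum.inr v ∈ D
    · refine trunc_contra D hdir w hsup (k.natPred + 1) (by omega) (by simpa only [Nat.add_sub_cancel] using hge.1) ?_ hseq
      intro v hv hvlt
      simp only [Nat.add_sub_cancel] at hvlt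
      refine hcon _ hv ⟨m', hm', ?_⟩
      rw [entryGE_iff]
      refine ⟨hvlt, ?_⟩
      have := sigOf_mono (hsup.1 _ hv)
      rw [sigLE_iff] at this
      rw [(this _ hvlt).2]
      exact hge.2
    · refine not_seq_sup_of_X D ⟨hne, hdir⟩ ?_ w hsup
      intro d hd
      rcases d with p | v
      · exact ⟨p, rfl⟩
      · exact absurd ⟨v, hd⟩ hseq

lemma compact_S (l : FinSeq) : IsCompactEl lLE (toS (Sum.inl l)) := by
  intro D s hD hsup hle
  by_contra hcon
  push_neg at hcon
  obtain ⟨w, rfl⟩ : ∃ w, s = Sum.inr w := by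
    rcases s with y | w
    · exact absurd hle (not_lLE_rX _ y)
    · exact ⟨w, rfl⟩
  have hle' : sigLE (Sum.inl l) (sigOf w) := hle
  set K := l.val.length with hKdef
  have hK : 1 ≤ K := List.length_pos_iff.mpr l.prop
  rw [sigLE_iff] at hle'
  have hKw : seqLt (sigOf w) (K - 1) := (hle' (K-1) (by omega : K - 1 < l.val.length)).1
  obtain ⟨hne, hdir⟩ := hD
  by_cases hseq : ∃ v : Sig ⊕ Sig, Sum.inr v ∈ D
  · refine trunc_contra D hdir w hsup K hK hKw ?_ hseq
    intro v hv hvlt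
    -- v has length ≥ K, so toS l ≤ toS v or toS' v
    have hlev : sigLE (Sum.inl l) (sigOf v) := by
      rw [sigLE_iff]
      intro n hn
      have hn' : n < K := hn
      have hlt : seqLt (sigOf v) n := seqLt_mono (by omega) hvlt
      refine ⟨hlt, ?_⟩
      have hmono := sigOf_mono (hsup.1 _ hv)
      rw [sigLE_iff] at hmono
      rw [(hle' n hn).2, (hmono n hlt).2]
    refine hcon _ hv ?_
    show lLE (toS (Sum.inl l)) (Sum.inr v)
    exact hlev
  · refine not_seq_sup_of_X D ⟨hne, hdir⟩ ?_ w hsup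
    intro d hd
    rcases d with p | v
    · exact ⟨p, rfl⟩
    · exact absurd ⟨v, hd⟩ hseq

lemma compact_S' (l : FinSeq) : IsCompactEl lLE (toS' (Sum.inl l)) := by
  intro D s hD hsup hle
  by_contra hcon
  push_neg at hcon
  obtain ⟨b, rfl⟩ : ∃ b, s = toS' b := by
    rcases s with y | (c | c)
    · exact absurd hle (not_lLE_rX _ y)
    · exact absurd hle (not_lLE_S'S _ c)
    · exact ⟨c, rfl⟩
  have hle' : sigLE (Sum.inl l) b := hle
  set K := l.val.length with hKdef
  have hK : 1 ≤ K := List.length_pos_iff.mpr l.prop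
  rw [sigLE_iff] at hle'
  have hKb : seqLt b (K - 1) := (hle' (K-1) (by omega : K - 1 < l.val.length)).1
  obtain ⟨hne, hdir⟩ := hD
  -- agreement of Σ* elements with b
  have hagree' : ∀ c, toS' c ∈ D → sigLE c b := by
    intro c hc
    exact hsup.1 _ hc
  by_cases h1 : ∃ c, toS' c ∈ D ∧ seqLt c (K - 1)
  · obtain ⟨c, hc, hclt⟩ := h1
    refine hcon _ hc ?_
    show sigLE (Sum.inl l) c
    rw [sigLE_iff]
    intro n hn
    have hn' : n < K := hn
    have hlt : seqLt c n := seqLt_mono (by omega) hclt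
    have hcb := hagree' c hc
    rw [sigLE_iff] at hcb
    exact ⟨hlt, by rw [(hle' n hn).2, (hcb n hlt).2]⟩
  by_cases h2 : ∃ c, toS' c ∈ D
  · -- all Σ* elements are short; then all Σ elements are short too
    push_neg at h1
    obtain ⟨c₀, hc₀⟩ := h2
    refine trunc_contra D hdir (Sum.inr b) hsup K hK hKb ?_ ⟨Sum.inr c₀, hc₀⟩
    rintro (a | c) hv hvlt
    · -- a Σ element of length ≥ K : push it into Σ*
      obtain ⟨e, he, hae, hce⟩ := hdir _ hv _ hc₀
      obtain ⟨e', rfl⟩ : ∃ e', e = toS' e' := by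
        rcases e with y | (c' | c')
        · exact absurd hce (not_lLE_rX _ y)
        · exact absurd hce (not_lLE_S'S _ c')
        · exact ⟨c', rfl⟩
      have hae' : sigLE a e' := hae
      rw [sigLE_iff] at hae'
      exact h1 e' he (hae' (K-1) hvlt).1
    · exact h1 c hv hvlt
  · -- no Σ* elements at all : toS b is a smaller upper bound
    have hub : ∀ d ∈ D, lLE d (toS b) := by
      intro d hd
      rcases d with p | (a | c)
      · obtain ⟨m, hm, hge⟩ := hsup.1 _ hd
        exact ⟨m, hm, hge⟩
      · exact (hsup.1 _ hd : sigLE a b)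
      · exact absurd ⟨c, hd⟩ h2
    exact not_lLE_S'S b b (hsup.2 _ hub)
/-! ### Prefixes of infinite sequences, non-compact elements -/

/-- The length-`n+1` prefix of an infinite sequence. -/
def pre (f : ℕ → ℕ+) (n : ℕ) : FinSeq :=
  ⟨List.ofFn (fun i : Fin (n+1) => f i), by
    intro h
    have := congrArg List.length h
    simp at this⟩

lemma pre_lt (f : ℕ → ℕ+) (n i : ℕ) : seqLt (Sum.inl (pre f n)) i ↔ i < n + 1 := by
  show i < (pre f n).val.length ↔ _
  simp [pre]

lemma pre_val (f : ℕ → ℕ+) (n i : ℕ) (hi : i < n + 1) :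
    seqVal (Sum.inl (pre f n)) i = f i := by
  show (pre f n).val.getD i 1 = f i
  rw [List.getD_eq_getElem _ 1 (by simpa [pre] using hi)]
  show (List.ofFn (fun j : Fin (n+1) => f j))[i]'(by simpa using hi) = f i
  rw [List.getElem_ofFn]

lemma pre_le (f : ℕ → ℕ+) (n : ℕ) : sigLE (Sum.inl (pre f n)) (Sum.inr f) := by
  rw [sigLE_iff]
  intro i hi
  exact ⟨trivial, pre_val f n i ((pre_lt f n i).mp hi)⟩

lemma pre_mono (f : ℕ → ℕ+) {n n' : ℕ} (h : n ≤ n') :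
    sigLE (Sum.inl (pre f n)) (Sum.inl (pre f n')) := by
  rw [sigLE_iff]
  intro i hi
  have hi' := (pre_lt f n i).mp hi
  refine ⟨(pre_lt f n' i).mpr (by omega), ?_⟩
  rw [pre_val f n i hi', pre_val f n' i (by omega)]

lemma sig_ub_of_pre (f : ℕ → ℕ+) (b : Sig)
    (h : ∀ n, sigLE (Sum.inl (pre f n)) b) : b = Sum.inr f := by
  cases b with
  | inl l =>
    exfalso
    have := h l.val.length
    rw [sigLE_iff] at this
    have h2 := (this l.val.length ((pre_lt f _ _).mpr (by omega))).1
    exact absurd (h2 : l.val.length < l.val.length) (lt_irrefl _)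
  | inr g =>
    congr 1
    funext i
    have := h i
    rw [sigLE_iff] at this
    have h2 := (this i ((pre_lt f i i).mpr (by omega))).2
    rw [pre_val f i i (by omega)] at h2
    exact h2.symm

/-- Least-upper-bound property of the `X`-chain `{(k, j)}_{j}`. -/
lemma x_chain_lub (k : ℕ+) (u : LP) (hu : ∀ j : ℕ+, lLE (toX (k, (j : WithTop ℕ+))) u) :
    lLE (toX (k, (⊤ : WithTop ℕ+))) u := by
  rcases u with y | w
  · have h1 := hu 1
    refine ⟨h1.1, ?_⟩
    rcases hy : y.2 with _ | p
    · exact le_top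
    · exfalso
      have := (hu (p + 1)).2
      rw [hy] at this
      have h2 : ((p + 1 : ℕ+) : WithTop ℕ+) ≤ ((p : ℕ+) : WithTop ℕ+) := this
      rw [WithTop.coe_le_coe] at h2
      have : (p : ℕ) + 1 ≤ (p : ℕ) := h2
      omega
  · exfalso
    set P := seqVal (sigOf w) k.natPred with hP
    obtain ⟨m, hm, hge⟩ := hu (P + 1)
    have hmval : ((P + 1 : ℕ+) : WithTop ℕ+) = ((m : ℕ+) : WithTop ℕ+) := hm
    rw [WithTop.coe_eq_coe] at hmval
    rw [entryGE_iff, ← hmval] at hge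
    have : (P : ℕ) + 1 ≤ (P : ℕ) := hge.2
    omega

lemma noncompact_Xtop (k : ℕ+) : ¬ IsCompactEl lLE (toX (k, (⊤ : WithTop ℕ+))) := by
  intro h
  obtain ⟨d, ⟨j, rfl⟩, hled⟩ := h {d | ∃ j : ℕ+, d = toX (k, (j : WithTop ℕ+))}
    (toX (k, (⊤ : WithTop ℕ+)))
    ⟨⟨toX (k, (1 : ℕ+)), 1, rfl⟩, by
      rintro a ⟨j, rfl⟩ b ⟨j', rfl⟩
      refine ⟨toX (k, ((j ⊔ j' : ℕ+) : WithTop ℕ+)), ⟨j ⊔ j', rfl⟩, ⟨rfl, ?_⟩, ⟨rfl, ?_⟩⟩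
      · exact WithTop.coe_le_coe.mpr le_sup_left
      · exact WithTop.coe_le_coe.mpr le_sup_right⟩
    ⟨by rintro a ⟨j, rfl⟩; exact ⟨rfl, le_top⟩,
     fun u hu => x_chain_lub k u (fun j => hu _ ⟨j, rfl⟩)⟩
    (lLE_refl _)
  have h2 : (⊤ : WithTop ℕ+) ≤ ((j : ℕ+) : WithTop ℕ+) := hled.2
  simp at h2

lemma pre_chain_lub_S (f : ℕ → ℕ+) (u : LP)
    (hu : ∀ n, lLE (toS (Sum.inl (pre f n))) u) : lLE (toS (Sum.inr f)) u := by
  obtain ⟨w, rfl⟩ : ∃ w, u = Sum.inr w := by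
    rcases u with y | w
    · exact absurd (hu 0) (not_lLE_rX _ y)
    · exact ⟨w, rfl⟩
  have hw : sigOf w = Sum.inr f := sig_ub_of_pre f (sigOf w) (fun n => hu n)
  show sigLE (Sum.inr f) (sigOf w)
  rw [hw]
  exact sigLE_refl _

lemma pre_chain_lub_S' (f : ℕ → ℕ+) (u : LP)
    (hu : ∀ n, lLE (toS' (Sum.inl (pre f n))) u) : lLE (toS' (Sum.inr f)) u := by
  obtain ⟨b, rfl⟩ : ∃ b, u = toS' b := by
    rcases u with y | (c | c)
    · exact absurd (hu 0) (not_lLE_rX _ y)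
    · exact absurd (hu 0) (not_lLE_S'S _ c)
    · exact ⟨c, rfl⟩
  have hb : b = Sum.inr f := sig_ub_of_pre f b (fun n => hu n)
  rw [hb]
  exact sigLE_refl (Sum.inr f : Sig)

lemma pre_chain_directed_S (f : ℕ → ℕ+) :
    DirectedSet lLE {d | ∃ n, d = toS (Sum.inl (pre f n))} := by
  refine ⟨⟨toS (Sum.inl (pre f 0)), 0, rfl⟩, ?_⟩
  rintro a ⟨n, rfl⟩ b ⟨n', rfl⟩
  exact ⟨toS (Sum.inl (pre f (n ⊔ n'))), ⟨n ⊔ n', rfl⟩,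
    pre_mono f le_sup_left, pre_mono f le_sup_right⟩

lemma pre_chain_directed_S' (f : ℕ → ℕ+) :
    DirectedSet lLE {d | ∃ n, d = toS' (Sum.inl (pre f n))} := by
  refine ⟨⟨toS' (Sum.inl (pre f 0)), 0, rfl⟩, ?_⟩
  rintro a ⟨n, rfl⟩ b ⟨n', rfl⟩
  exact ⟨toS' (Sum.inl (pre f (n ⊔ n'))), ⟨n ⊔ n', rfl⟩,
    pre_mono f le_sup_left, pre_mono f le_sup_right⟩

lemma noncompact_Sinf (f : ℕ → ℕ+) : ¬ IsCompactEl lLE (toS (Sum.inr f)) := by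
  intro h
  obtain ⟨d, ⟨n, rfl⟩, hled⟩ := h {d | ∃ n, d = toS (Sum.inl (pre f n))}
    (toS (Sum.inr f)) (pre_chain_directed_S f)
    ⟨by rintro a ⟨n, rfl⟩; exact pre_le f n,
     fun u hu => pre_chain_lub_S f u (fun n => hu _ ⟨n, rfl⟩)⟩
    (lLE_refl _)
  have h2 : sigLE (Sum.inr f) (Sum.inl (pre f n)) := hled
  rw [sigLE_iff] at h2
  have := (h2 (n+1) trivial).1
  rw [pre_lt] at this
  omega

lemma noncompact_S'inf (f : ℕ → ℕ+) : ¬ IsCompactEl lLE (toS' (Sum.inr f)) := by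
  intro h
  obtain ⟨d, ⟨n, rfl⟩, hled⟩ := h {d | ∃ n, d = toS' (Sum.inl (pre f n))}
    (toS' (Sum.inr f)) (pre_chain_directed_S' f)
    ⟨by rintro a ⟨n, rfl⟩; exact pre_le f n,
     fun u hu => pre_chain_lub_S' f u (fun n => hu _ ⟨n, rfl⟩)⟩
    (lLE_refl _)
  have h2 : sigLE (Sum.inr f) (Sum.inl (pre f n)) := hled
  rw [sigLE_iff] at h2
  have := (h2 (n+1) trivial).1
  rw [pre_lt] at this
  omega
/-! ### The compact elements below a point, and the main theorem -/

/-- For compact `x`, the set of compacts below `x` is trivially directed with sup `x`. -/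
lemma Kx_of_compact (x : LP) (hx : IsCompactEl lLE x) :
    DirectedSet lLE {c | IsCompactEl lLE c ∧ lLE c x} ∧
    IsSupOf lLE {c | IsCompactEl lLE c ∧ lLE c x} x := by
  refine ⟨⟨⟨x, hx, lLE_refl x⟩, ?_⟩, ⟨fun c hc => hc.2, fun u hu => hu x ⟨hx, lLE_refl x⟩⟩⟩
  intro a ha b hb
  exact ⟨x, ⟨hx, lLE_refl x⟩, ha.2, hb.2⟩

lemma below_S_inf (f : ℕ → ℕ+) (c : LP) (hcc : IsCompactEl lLE c)
    (hc : lLE c (toS (Sum.inr f))) : ∃ N, lLE c (toS (Sum.inl (pre f N))) := by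
  rcases c with p | (a | a)
  · obtain ⟨m, hm, hge⟩ := hc
    refine ⟨p.1.natPred, m, hm, ?_⟩
    rw [entryGE_iff] at hge ⊢
    refine ⟨(pre_lt f _ _).mpr (by omega), ?_⟩
    show m ≤ seqVal (Sum.inl (pre f p.1.natPred)) p.1.natPred
    rw [pre_val f _ _ (by omega)]
    exact hge.2
  · have hle : sigLE a (Sum.inr f) := hc
    rcases a with l | g
    · refine ⟨l.val.length, ?_⟩
      show sigLE (Sum.inl l) (Sum.inl (pre f l.val.length))
      rw [sigLE_iff] at hle ⊢
      intro n hn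
      have hn' : n < l.val.length := hn
      refine ⟨(pre_lt f _ _).mpr (by omega), ?_⟩
      rw [(hle n hn).2]
      exact ((pre_val f _ _ (by omega))).symm
    · have : g = f := hle
      subst this
      exact absurd hcc (noncompact_Sinf g)
  · exact absurd hc (not_lLE_S'S a (Sum.inr f))

lemma below_S'_inf (f : ℕ → ℕ+) (c : LP) (hcc : IsCompactEl lLE c)
    (hc : lLE c (toS' (Sum.inr f))) : ∃ N, lLE c (toS' (Sum.inl (pre f N))) := by
  rcases c with p | (a | a)
  · obtain ⟨m, hm, hge⟩ := hc
    refine ⟨p.1.natPred, m, hm, ?_⟩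
    rw [entryGE_iff] at hge ⊢
    refine ⟨(pre_lt f _ _).mpr (by omega), ?_⟩
    show m ≤ seqVal (Sum.inl (pre f p.1.natPred)) p.1.natPred
    rw [pre_val f _ _ (by omega)]
    exact hge.2
  · have hle : sigLE a (Sum.inr f) := hc
    rcases a with l | g
    · refine ⟨l.val.length, ?_⟩
      show sigLE (Sum.inl l) (Sum.inl (pre f l.val.length))
      rw [sigLE_iff] at hle ⊢
      intro n hn
      have hn' : n < l.val.length := hn
      refine ⟨(pre_lt f _ _).mpr (by omega), ?_⟩
      rw [(hle n hn).2]
      exact ((pre_val f _ _ (by omega))).symm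
    · have : g = f := hle
      subst this
      exact absurd hcc (noncompact_Sinf g)
  · have hle : sigLE a (Sum.inr f) := hc
    rcases a with l | g
    · refine ⟨l.val.length, ?_⟩
      show sigLE (Sum.inl l) (Sum.inl (pre f l.val.length))
      rw [sigLE_iff] at hle ⊢
      intro n hn
      have hn' : n < l.val.length := hn
      refine ⟨(pre_lt f _ _).mpr (by omega), ?_⟩
      rw [(hle n hn).2]
      exact ((pre_val f _ _ (by omega))).symm
    · have : g = f := hle
      subst this
      exact absurd hcc (noncompact_S'inf g)

/-- Part 2: every element is the directed sup of the compacts below it. -/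
lemma Kx_all (x : LP) :
    DirectedSet lLE {c | IsCompactEl lLE c ∧ lLE c x} ∧
    IsSupOf lLE {c | IsCompactEl lLE c ∧ lLE c x} x := by
  rcases x with p | (a | a)
  · obtain ⟨k, n⟩ := p
    rcases n with _ | q
    · -- x = (k, ⊤)
      have hmem : ∀ j : ℕ+, toX (k, (j : WithTop ℕ+)) ∈
          {c | IsCompactEl lLE c ∧ lLE c (toX (k, (⊤ : WithTop ℕ+)))} :=
        fun j => ⟨compact_X k j, ⟨rfl, le_top⟩⟩
      constructor
      · refine ⟨⟨toX (k, ((1 : ℕ+) : WithTop ℕ+)), hmem 1⟩, ?_⟩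
        intro c hc c' hc'
        obtain ⟨y, rfl⟩ : ∃ y : XP, c = toX y := by
          rcases c with y | v
          · exact ⟨y, rfl⟩
          · exact absurd hc.2 (not_lLE_rX v _)
        obtain ⟨y', rfl⟩ : ∃ y' : XP, c' = toX y' := by
          rcases c' with y' | v
          · exact ⟨y', rfl⟩
          · exact absurd hc'.2 (not_lLE_rX v _)
        have h1 : y.1 = k := hc.2.1
        have h2 : y'.1 = k := hc'.2.1
        rcases le_total y.2 y'.2 with h | h
        · exact ⟨toX y', hc', ⟨h1.trans h2.symm, h⟩, lLE_refl _⟩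
        · exact ⟨toX y, hc, lLE_refl _, ⟨h2.trans h1.symm, h⟩⟩
      · exact ⟨fun c hc => hc.2, fun u hu => x_chain_lub k u (fun j => hu _ (hmem j))⟩
    · exact Kx_of_compact _ (compact_X k q)
  · rcases a with l | f
    · exact Kx_of_compact _ (compact_S l)
    · -- x = toS (Sum.inr f)
      have hmem : ∀ N, toS (Sum.inl (pre f N)) ∈
          {c | IsCompactEl lLE c ∧ lLE c (toS (Sum.inr f))} :=
        fun N => ⟨compact_S _, pre_le f N⟩
      constructor
      · refine ⟨⟨toS (Sum.inl (pre f 0)), hmem 0⟩, ?_⟩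
        intro c hc c' hc'
        obtain ⟨N, hN⟩ := below_S_inf f c hc.1 hc.2
        obtain ⟨N', hN'⟩ := below_S_inf f c' hc'.1 hc'.2
        refine ⟨toS (Sum.inl (pre f (N ⊔ N'))), hmem _, ?_, ?_⟩
        · exact lLE_trans hN (pre_mono f le_sup_left)
        · exact lLE_trans hN' (pre_mono f le_sup_right)
      · exact ⟨fun c hc => hc.2, fun u hu => pre_chain_lub_S f u (fun N => hu _ (hmem N))⟩
  · rcases a with l | f
    · exact Kx_of_compact _ (compact_S' l)
    · have hmem : ∀ N, toS' (Sum.inl (pre f N)) ∈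
          {c | IsCompactEl lLE c ∧ lLE c (toS' (Sum.inr f))} :=
        fun N => ⟨compact_S' _, pre_le f N⟩
      constructor
      · refine ⟨⟨toS' (Sum.inl (pre f 0)), hmem 0⟩, ?_⟩
        intro c hc c' hc'
        obtain ⟨N, hN⟩ := below_S'_inf f c hc.1 hc.2
        obtain ⟨N', hN'⟩ := below_S'_inf f c' hc'.1 hc'.2
        refine ⟨toS' (Sum.inl (pre f (N ⊔ N'))), hmem _, ?_, ?_⟩
        · exact lLE_trans hN (pre_mono f le_sup_left)
        · exact lLE_trans hN' (pre_mono f le_sup_right)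
      · exact ⟨fun c hc => hc.2, fun u hu => pre_chain_lub_S' f u (fun N => hu _ (hmem N))⟩

/-- Part 3: the compact elements form a countable set. -/
lemma K_countable : {u : LP | IsCompactEl lLE u}.Countable := by
  have hsub : {u : LP | IsCompactEl lLE u} ⊆
      (Set.range fun p : ℕ+ × ℕ+ => toX (p.1, (p.2 : WithTop ℕ+))) ∪
      (Set.range fun l : FinSeq => toS (Sum.inl l)) ∪
      (Set.range fun l : FinSeq => toS' (Sum.inl l)) := by
    intro c hc
    rcases c with p | (a | a)
    · obtain ⟨k, n⟩ := p
      rcases n with _ | q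
      · exact absurd hc (noncompact_Xtop k)
      · exact Or.inl (Or.inl ⟨(k, q), rfl⟩)
    · rcases a with l | f
      · exact Or.inl (Or.inr ⟨l, rfl⟩)
      · exact absurd hc (noncompact_Sinf f)
    · rcases a with l | f
      · exact Or.inr ⟨l, rfl⟩
      · exact absurd hc (noncompact_S'inf f)
  exact Set.Countable.mono hsub
    (((Set.countable_range _).union (Set.countable_range _)).union (Set.countable_range _))

theorem stmt17 :
    (∀ D : Set LP, DirectedSet lLE D → ∃ s, IsSupOf lLE D s) ∧
    (∀ x : LP,
      DirectedSet lLE {c | IsCompactEl lLE c ∧ lLE c x} ∧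
      IsSupOf lLE {c | IsCompactEl lLE c ∧ lLE c x} x) ∧
    {u : LP | IsCompactEl lLE u}.Countable :=
  ⟨lp_sup, Kx_all, K_countable⟩
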